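/- arXiv:2103.15291 — 2 statements merged into one kernel-verified Lean document; each statement's English description precedes it below -/
import Mathlib

section
/- Let 1 ≤ r ≤ n and n-r+2 ≤ m ≤ n. Then ∑_{ℓ=1}^{n+1-max(m,r)} s(r, m-n+r-1+ℓ) · s_r(n, n-ℓ+1) = s(n,m), where s(n,m) denotes unsigned Stirling numbers of the first kind and s_r the unsigned r-Stirling numbers of the first kind. -/
open Finset

/-- Unsigned Stirling numbers of the first kind. -/
def stirling1 : ℕ → ℕ → ℕ
  | 0, 0 => 1
  | 0, _ + 1 => 0
  | _ + 1, 0 => 0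
  | n + 1, k + 1 => n * stirling1 n (k + 1) + stirling1 n k

/-- Stirling numbers of the second kind. -/
def stirling2 : ℕ → ℕ → ℕ
  | 0, 0 => 1
  | 0, _ + 1 => 0
  | _ + 1, 0 => 0
  | n + 1, k + 1 => (k + 1) * stirling2 n (k + 1) + stirling2 n k

/-- Unsigned r-Stirling numbers of the first kind. -/
def rStirling1 (r : ℕ) : ℕ → ℕ → ℕ
  | 0, m => if r = 0 ∧ m = 0 then 1 else 0
  | n + 1, m =>
    if n + 1 < r then 0
    else if n + 1 = r then (if m = r then 1 else 0)
    else n * rStirling1 r n m + (match m with | 0 => 0 | m' + 1 => rStirling1 r n m')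

/-- r-Stirling numbers of the second kind. -/
def rStirling2 (r : ℕ) : ℕ → ℕ → ℕ
  | 0, m => if r = 0 ∧ m = 0 then 1 else 0
  | n + 1, m =>
    if n + 1 < r then 0
    else if n + 1 = r then (if m = r then 1 else 0)
    else m * rStirling2 r n m + (match m with | 0 => 0 | m' + 1 => rStirling2 r n m')

/-- Poly-Cauchy numbers of the first kind `c_n^{(k)}`. -/
noncomputable def polyCauchy (k : ℤ) (n : ℕ) : ℝ :=
  ∑ ℓ ∈ range (n + 1), (-1 : ℝ) ^ (n - ℓ) * stirling1 n ℓ / ((ℓ : ℝ) + 1) ^ k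

/-- Poly-Cauchy numbers of the second kind `ĉ_n^{(k)}`. -/
noncomputable def polyCauchy2 (k : ℤ) (n : ℕ) : ℝ :=
  (-1 : ℝ) ^ n * ∑ ℓ ∈ range (n + 1), (stirling1 n ℓ : ℝ) / ((ℓ : ℝ) + 1) ^ k

/-- Poly-Cauchy polynomials of the first kind `c_n^{(k)}(z)`. -/
noncomputable def polyCauchyPoly (k : ℤ) (n : ℕ) (z : ℝ) : ℝ :=
  ∑ m ∈ range (n + 1), (stirling1 n m : ℝ) * (-1 : ℝ) ^ (n - m) *
    ∑ i ∈ range (m + 1), (m.choose i : ℝ) * z ^ (m - i) / ((i : ℝ) + 1) ^ k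

/-- Shifted poly-Cauchy numbers of the first kind `c_{n,α}^{(k)}`. -/
noncomputable def shiftedPolyCauchy (k : ℤ) (n : ℕ) (α : ℝ) : ℝ :=
  ∑ m ∈ range (n + 1), (stirling1 n m : ℝ) * (-1 : ℝ) ^ (n - m) / ((m : ℝ) + α) ^ k

/-- Shifted poly-Cauchy numbers of the second kind `ĉ_{n,α}^{(k)}`. -/
noncomputable def shiftedPolyCauchy2 (k : ℤ) (n : ℕ) (α : ℝ) : ℝ :=
  (-1 : ℝ) ^ n * ∑ m ∈ range (n + 1), (stirling1 n m : ℝ) / ((m : ℝ) + α) ^ k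

lemma stirling1_zero (n : ℕ) (h : 1 ≤ n) : stirling1 n 0 = 0 := by
  cases n with
  | zero => omega
  | succ k => rfl

lemma stirling1_eq_zero_of_lt : ∀ n k, n < k → stirling1 n k = 0 := by
  intro n
  induction n with
  | zero => intro k h; cases k with | zero => omega | succ k => rfl
  | succ n ih =>
    intro k h
    cases k with
    | zero => omega
    | succ k =>
      show n * stirling1 n (k+1) + stirling1 n k = 0
      rw [ih (k+1) (by omega), ih k (by omega)]; ring

lemma rStirling1_eq_zero_of_lt_r (r : ℕ) : ∀ n m, m < r → rStirling1 r n m = 0 := by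
  intro n
  induction n with
  | zero => intro m h; simp only [rStirling1]; split
            · omega
            · rfl
  | succ n ih =>
    intro m h
    simp only [rStirling1]
    split
    · rfl
    split
    · split <;> omega
    · cases m with
      | zero => simp [ih 0 h]
      | succ m' => simp [ih (m'+1) h, ih m' (by omega)]

lemma rStirling1_eq_zero_of_gt (r : ℕ) : ∀ n m, n < m → rStirling1 r n m = 0 := by
  intro n
  induction n with
  | zero => intro m h; simp only [rStirling1]; split
            · omega
            · rfl
  | succ n ih =>
    intro m h
    simp only [rStirling1]
    split
    · rfl
    split
    · split <;> omega
    · cases m with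
      | zero => omega
      | succ m' => simp [ih (m'+1) (by omega), ih m' (by omega)]

lemma rStirling1_self (r : ℕ) (hr : 1 ≤ r) (m : ℕ) :
    rStirling1 r r m = if m = r then 1 else 0 := by
  cases r with
  | zero => omega
  | succ r' =>
    simp [rStirling1]

lemma key (r : ℕ) (hr : 1 ≤ r) : ∀ n, r ≤ n → ∀ m,
    ∑ j ∈ range (n + 1), stirling1 r (m + r - j) * rStirling1 r n j = stirling1 n m := by
  intro n
  induction n with
  | zero => omega
  | succ n ih =>
    intro hn m
    rcases Nat.lt_or_ge r (n + 1) with hlt | hge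
    · -- n ≥ r, use recurrence
      have hrn : r ≤ n := by omega
      have hrec : ∀ j, rStirling1 r (n+1) j =
          n * rStirling1 r n j + (match j with | 0 => 0 | j' + 1 => rStirling1 r n j') := by
        intro j
        simp only [rStirling1]
        split
        · omega
        split
        · omega
        · rfl
      calc ∑ j ∈ range (n + 2), stirling1 r (m + r - j) * rStirling1 r (n+1) j
          = ∑ j ∈ range (n + 2), (n * (stirling1 r (m + r - j) * rStirling1 r n j)
              + stirling1 r (m + r - j) * (match j with | 0 => 0 | j' + 1 => rStirling1 r n j')) := by
            refine Finset.sum_congr rfl fun j _ => ?_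
            rw [hrec j]; ring
        _ = n * (∑ j ∈ range (n + 2), stirling1 r (m + r - j) * rStirling1 r n j)
              + ∑ j ∈ range (n + 2), stirling1 r (m + r - j) *
                (match j with | 0 => 0 | j' + 1 => rStirling1 r n j') := by
            rw [Finset.sum_add_distrib, Finset.mul_sum]
        _ = n * stirling1 n m + ∑ j ∈ range (n + 1), stirling1 r (m + r - (j+1)) * rStirling1 r n j := by
            congr 1
            · rw [Finset.sum_range_succ, rStirling1_eq_zero_of_gt r n (n+1) (by omega)]
              rw [ih hrn m]; ring
            · rw [Finset.sum_range_succ']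
              simp
        _ = stirling1 (n + 1) m := by
            cases m with
            | zero =>
              rw [stirling1_zero (n+1) (by omega), stirling1_zero n (by omega)]
              have : ∀ j ∈ range (n + 1), stirling1 r (0 + r - (j+1)) * rStirling1 r n j = 0 := by
                intro j _
                rcases Nat.lt_or_ge j r with h | h
                · rw [rStirling1_eq_zero_of_lt_r r n j h]; ring
                · have : 0 + r - (j + 1) = 0 := by omega
                  rw [this, stirling1_zero r hr]; ring
              rw [Finset.sum_congr rfl this]
              simp
            | succ m' =>
              have : ∀ j, m' + 1 + r - (j + 1) = m' + r - j := by intro j; omega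
              simp only [this]
              rw [ih hrn m']
              rfl
    · -- n + 1 = r : base case
      have heq : n + 1 = r := by omega
      subst heq
      rw [Finset.sum_eq_single (n+1)]
      · rw [rStirling1_self (n+1) (by omega) (n+1), if_pos rfl]
        have : m + (n+1) - (n+1) = m := by omega
        rw [this]; ring
      · intro j hj hne
        rw [rStirling1_self (n+1) (by omega) j, if_neg hne]; ring
      · intro h; simp at h

theorem stmt9 (n r m : ℕ) (hr : 1 ≤ r) (hn : r ≤ n) (hm : n - r + 2 ≤ m)
    (hm' : m ≤ n) :
    ∑ ℓ ∈ Finset.Icc 1 (n + 1 - max m r),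
        stirling1 r (m + r + ℓ - (n + 1)) * rStirling1 r n (n + 1 - ℓ) =
      stirling1 n m := by
  rw [← key r hr n hn m]
  set M := max m r with hM
  have hMn : M ≤ n := by omega
  rw [show range (n+1) = Finset.Icc 0 n from by ext x; simp [Nat.lt_succ_iff]]
  rw [← Finset.sum_subset (Finset.Icc_subset_Icc (by omega : M ≥ (0:ℕ)).le le_rfl)]
  · apply Finset.sum_nbij' (fun ℓ => n + 1 - ℓ) (fun j => n + 1 - j)
    · intro a ha; simp only [Finset.mem_Icc] at *; omega
    · intro a ha; simp only [Finset.mem_Icc] at *; omega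
    · intro a ha; simp only [Finset.mem_Icc] at *; omega
    · intro a ha; simp only [Finset.mem_Icc] at *; omega
    · intro a ha
      simp only [Finset.mem_Icc] at ha
      congr 2
      omega
  · intro j hj hjn
    simp only [Finset.mem_Icc] at hj hjn
    have : j < M := by omega
    rcases Nat.lt_or_ge j r with h | h
    · rw [rStirling1_eq_zero_of_lt_r r n j h]; ring
    · have hjm : j < m := by omega
      rw [stirling1_eq_zero_of_lt r (m + r - j) (by omega)]; ring
end

section
/- For integers n, r, k with n ≥ r ≥ 1, ∑_{j=r}^{n} S_r(n,j) · c_j^{(k)}(1) = ∑_{j=r-1}^{n} S_r(n+1, j+1) · c_j^{(k)}, i.e., evaluating the poly-Cauchy polynomial at 1 under the r-Stirling transform agrees with the shifted r-Stirling transform of the poly-Cauchy numbers. -/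
open Finset

lemma stirling1_zero_right (n : ℕ) : stirling1 (n+1) 0 = 0 := rfl

lemma stirling1_succ (n k : ℕ) :
    stirling1 (n+1) (k+1) = n * stirling1 n (k+1) + stirling1 n k := rfl

lemma stirling1_eq_zero : ∀ n m : ℕ, n < m → stirling1 n m = 0 := by
  intro n
  induction n with
  | zero => intro m h; match m, h with | m+1, _ => rfl
  | succ n ih =>
    intro m h
    match m, h with
    | m+1, h =>
      rw [stirling1_succ, ih (m+1) (by omega), ih m (by omega)]; ring

lemma gkey : ∀ n : ℕ, ∀ i : ℕ,
    ∑ m ∈ range (n+2), (-1:ℤ)^m * stirling1 (n+1) m * ((m.choose i : ℕ) : ℤ) =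
      (-1:ℤ)^i * ((stirling1 (n+1) i : ℤ) - (n+1) * (stirling1 n i : ℤ)) := by
  intro n
  induction n with
  | zero =>
    intro i
    rw [Finset.sum_range_succ, Finset.sum_range_succ, Finset.sum_range_zero]
    show (0:ℤ) + (-1)^0 * (stirling1 1 0 : ℤ) * _ + (-1)^1 * (stirling1 1 1 : ℤ) * _ = _
    match i with
    | 0 => simp [stirling1]
    | 1 => simp [stirling1]
    | (j+2) =>
      rw [stirling1_eq_zero 1 (j+2) (by omega), stirling1_eq_zero 0 (j+2) (by omega),
        Nat.choose_eq_zero_of_lt (by omega), Nat.choose_eq_zero_of_lt (by omega)]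
      simp
  | succ n ih =>
    intro i
    -- peel first term of LHS
    rw [Finset.sum_range_succ' _ (n+2)]
    have h0 : (-1:ℤ)^0 * (stirling1 (n+2) 0 : ℤ) * ((Nat.choose 0 i : ℕ) : ℤ)
        = 0 := by simp [stirling1_zero_right]
    rw [h0, add_zero]
    have hexp : ∀ j ∈ range (n+2),
        (-1:ℤ)^(j+1) * (stirling1 (n+2) (j+1) : ℤ) * (((j+1).choose i : ℕ) : ℤ)
        = (n+1) * ((-1:ℤ)^j * (stirling1 (n+1) (j+1) : ℤ) * (-(((j+1).choose i : ℕ) : ℤ)))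
          + (-1:ℤ)^(j+1) * (stirling1 (n+1) j : ℤ) * (((j+1).choose i : ℕ) : ℤ) := by
      intro j _
      rw [stirling1_succ]
      push_cast
      ring
    rw [Finset.sum_congr rfl hexp, Finset.sum_add_distrib, ← Finset.mul_sum]
    have hA : ∑ j ∈ range (n + 2),
        (-1:ℤ)^j * (stirling1 (n+1) (j+1) : ℤ) * (-(((j+1).choose i : ℕ) : ℤ))
        = (-1:ℤ)^i * ((stirling1 (n+1) i : ℤ) - (n+1) * (stirling1 n i : ℤ)) := by
      rw [Finset.sum_range_succ, stirling1_eq_zero (n+1) (n+2) (by omega), ← ih i,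
        Finset.sum_range_succ' _ (n+1), stirling1_zero_right]
      push_cast
      simp only [mul_zero, zero_mul, neg_zero, add_zero]
      exact Finset.sum_congr rfl fun j _ => by ring
    rw [hA]
    match i with
    | 0 =>
      have hB : ∑ j ∈ range (n + 2),
          (-1:ℤ)^(j+1) * (stirling1 (n+1) j : ℤ) * (((j+1).choose 0 : ℕ) : ℤ)
          = -((-1:ℤ)^0 * ((stirling1 (n+1) 0 : ℤ) - (n+1) * (stirling1 n 0 : ℤ))) := by
        rw [← ih 0]
        rw [← Finset.sum_neg_distrib]
        refine Finset.sum_congr rfl fun j _ => by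
          rw [Nat.choose_zero_right, Nat.choose_zero_right]; push_cast; ring
      rw [hB]
      have hn0 : (n:ℤ) * (stirling1 n 0 : ℤ) = 0 := by
        match n with
        | 0 => simp
        | m+1 => rw [stirling1_zero_right]; ring
      rw [stirling1_zero_right, stirling1_zero_right]
      push_cast
      nlinarith [hn0]
    | i'+1 =>
      have hB : ∑ j ∈ range (n + 2),
          (-1:ℤ)^(j+1) * (stirling1 (n+1) j : ℤ) * (((j+1).choose (i'+1) : ℕ) : ℤ)
          = -((-1:ℤ)^i' * ((stirling1 (n+1) i' : ℤ) - (n+1) * (stirling1 n i' : ℤ)))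
            - ((-1:ℤ)^(i'+1) * ((stirling1 (n+1) (i'+1) : ℤ) - (n+1) * (stirling1 n (i'+1) : ℤ))) := by
        rw [← ih i', ← ih (i'+1), ← Finset.sum_neg_distrib, ← Finset.sum_sub_distrib]
        refine Finset.sum_congr rfl fun j _ => by
          rw [Nat.choose_succ_succ]
          push_cast
          ring
      rw [hB, stirling1_succ (n+1) i', stirling1_succ n i']
      push_cast
      ring

lemma rS2_succ_succ (r n m : ℕ) : rStirling2 r (n+1) (m+1) =
    if n + 1 < r then 0
    else if n + 1 = r then (if m + 1 = r then 1 else 0)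
    else (m+1) * rStirling2 r n (m+1) + rStirling2 r n m := rfl

lemma rS2_succ_zero (r n : ℕ) : rStirling2 r (n+1) 0 =
    if n + 1 < r then 0
    else if n + 1 = r then (if 0 = r then 1 else 0)
    else 0 := by
  show (if n + 1 < r then 0
    else if n + 1 = r then (if 0 = r then 1 else 0)
    else 0 * rStirling2 r n 0 + 0) = _
  simp

lemma rS2_rec (r n m : ℕ) (h : r ≤ n) :
    rStirling2 r (n+1) (m+1) = (m+1) * rStirling2 r n (m+1) + rStirling2 r n m := by
  rw [rS2_succ_succ, if_neg (by omega), if_neg (by omega)]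

lemma rS2_lt (r : ℕ) : ∀ n m, m < r → rStirling2 r n m = 0 := by
  intro n
  induction n with
  | zero =>
    intro m h
    show (if r = 0 ∧ m = 0 then 1 else 0) = 0
    rw [if_neg (by omega)]
  | succ n ih =>
    intro m h
    match m with
    | 0 =>
      rw [rS2_succ_zero]
      rcases Nat.lt_or_ge (n+1) r with h1 | h1
      · rw [if_pos h1]
      · rw [if_neg (by omega)]
        rcases eq_or_ne (n+1) r with h2 | h2
        · rw [if_pos h2, if_neg (by omega)]
        · rw [if_neg h2]
    | m+1 =>
      rw [rS2_succ_succ]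
      rcases Nat.lt_or_ge (n+1) r with h1 | h1
      · rw [if_pos h1]
      · rw [if_neg (by omega)]
        rcases eq_or_ne (n+1) r with h2 | h2
        · rw [if_pos h2, if_neg (by omega)]
        · rw [if_neg h2, ih (m+1) h, ih m (by omega)]; ring

lemma rS2_gt (r : ℕ) : ∀ n m, n < m → rStirling2 r n m = 0 := by
  intro n
  induction n with
  | zero =>
    intro m h
    show (if r = 0 ∧ m = 0 then 1 else 0) = 0
    rw [if_neg (by omega)]
  | succ n ih =>
    intro m h
    match m, h with
    | m+1, h =>
      rw [rS2_succ_succ]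
      rcases Nat.lt_or_ge (n+1) r with h1 | h1
      · rw [if_pos h1]
      · rw [if_neg (by omega)]
        rcases eq_or_ne (n+1) r with h2 | h2
        · rw [if_pos h2, if_neg (by omega)]
        · rw [if_neg h2, ih (m+1) (by omega), ih m (by omega)]; ring

lemma neg_one_pow_sub' {m n : ℕ} (h : m ≤ n) : (-1:ℝ)^(n-m) = (-1:ℝ)^n * (-1:ℝ)^m := by
  have h1 : (-1:ℝ)^(n-m) * (-1:ℝ)^m = (-1:ℝ)^n := by rw [← pow_add, Nat.sub_add_cancel h]
  have h2 : ((-1:ℝ)^m) * ((-1:ℝ)^m) = 1 := by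
    rw [← pow_add]; exact Even.neg_one_pow ⟨m, rfl⟩
  calc (-1:ℝ)^(n-m) = (-1:ℝ)^(n-m) * ((-1:ℝ)^m * (-1:ℝ)^m) := by rw [h2, mul_one]
    _ = (-1:ℝ)^n * (-1:ℝ)^m := by rw [← mul_assoc, h1]

lemma rkey (n i : ℕ) (hi : i ≤ n+1) :
    ∑ m ∈ range (n+2), (stirling1 (n+1) m : ℝ) * (-1:ℝ)^(n+1-m) * ((m.choose i : ℕ) : ℝ)
    = (-1:ℝ)^(n+1-i) * (stirling1 (n+1) i : ℝ)
      + ((n:ℝ)+1) * ((-1:ℝ)^(n-i) * (stirling1 n i : ℝ)) := by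
  have hz := gkey n i
  have hr : ∑ m ∈ range (n+2), (-1:ℝ)^m * (stirling1 (n+1) m : ℝ) * ((m.choose i : ℕ) : ℝ)
      = (-1:ℝ)^i * ((stirling1 (n+1) i : ℝ) - ((n:ℝ)+1) * (stirling1 n i : ℝ)) := by
    exact_mod_cast congrArg (Int.cast : ℤ → ℝ) hz
  have hL : ∑ m ∈ range (n+2), (stirling1 (n+1) m : ℝ) * (-1:ℝ)^(n+1-m) * ((m.choose i : ℕ) : ℝ)
      = (-1:ℝ)^(n+1) * ((-1:ℝ)^i * ((stirling1 (n+1) i : ℝ) - ((n:ℝ)+1) * (stirling1 n i : ℝ))) := by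
    rw [← hr, Finset.mul_sum]
    refine Finset.sum_congr rfl fun m hm => ?_
    simp only [Finset.mem_range] at hm
    rw [neg_one_pow_sub' (by omega : m ≤ n+1)]
    ring
  rw [hL]
  rcases Nat.lt_or_ge i (n+1) with hlt | hge
  · rw [neg_one_pow_sub' (by omega : i ≤ n+1), neg_one_pow_sub' (by omega : i ≤ n)]
    rw [pow_succ]
    ring
  · have hieq : i = n+1 := by omega
    subst hieq
    rw [stirling1_eq_zero n (n+1) (by omega)]
    have : ((n:ℕ)+1) - ((n:ℕ)+1) = 0 := by omega
    rw [this]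
    have h2 : ((-1:ℝ)^(n+1)) * ((-1:ℝ)^(n+1)) = 1 := by
      rw [← pow_add]; exact Even.neg_one_pow ⟨n+1, rfl⟩
    push_cast
    nlinarith [h2]


lemma pc_one (k : ℤ) (n : ℕ) :
    polyCauchyPoly k (n+1) 1 = polyCauchy k (n+1) + ((n:ℝ)+1) * polyCauchy k n := by
  unfold polyCauchyPoly polyCauchy
  have hinner : ∀ m ∈ range (n+2),
      (stirling1 (n+1) m : ℝ) * (-1 : ℝ) ^ (n+1-m) *
        ∑ i ∈ range (m + 1), (m.choose i : ℝ) * (1:ℝ) ^ (m - i) / ((i : ℝ) + 1) ^ k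
      = ∑ i ∈ range (n+2),
          (stirling1 (n+1) m : ℝ) * (-1 : ℝ) ^ (n+1-m) * ((m.choose i : ℝ) / ((i : ℝ) + 1) ^ k) := by
    intro m hm
    have hsub : range (m+1) ⊆ range (n+2) := by
      apply Finset.range_subset_range.2
      simp only [Finset.mem_range] at hm
      omega
    rw [Finset.mul_sum]
    have h1 : ∀ i ∈ range (m+1),
        (stirling1 (n+1) m : ℝ) * (-1 : ℝ) ^ (n+1-m) *
          ((m.choose i : ℝ) * (1:ℝ) ^ (m - i) / ((i : ℝ) + 1) ^ k)
        = (stirling1 (n+1) m : ℝ) * (-1 : ℝ) ^ (n+1-m) *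
          ((m.choose i : ℝ) / ((i : ℝ) + 1) ^ k) := by
      intro i _
      rw [one_pow, mul_one]
    have h2 : ∀ i ∈ range (n+2), i ∉ range (m+1) →
        (stirling1 (n+1) m : ℝ) * (-1 : ℝ) ^ (n+1-m) *
          ((m.choose i : ℝ) / ((i : ℝ) + 1) ^ k) = 0 := by
      intro i _ hi
      simp only [Finset.mem_range, not_lt] at hi
      rw [Nat.choose_eq_zero_of_lt (by omega)]
      simp
    exact (Finset.sum_congr rfl h1).trans (Finset.sum_subset hsub h2)
  rw [Finset.sum_congr rfl hinner, Finset.sum_comm]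
  have hcol : ∀ i ∈ range (n+2),
      ∑ m ∈ range (n+2),
        (stirling1 (n+1) m : ℝ) * (-1 : ℝ) ^ (n+1-m) * ((m.choose i : ℝ) / ((i : ℝ) + 1) ^ k)
      = (-1 : ℝ)^(n+1-i) * (stirling1 (n+1) i : ℝ) / ((i : ℝ) + 1) ^ k
        + ((n:ℝ)+1) * ((-1 : ℝ)^(n-i) * (stirling1 n i : ℝ) / ((i : ℝ) + 1) ^ k) := by
    intro i hi
    simp only [Finset.mem_range] at hi
    have : ∑ m ∈ range (n+2),
        (stirling1 (n+1) m : ℝ) * (-1 : ℝ) ^ (n+1-m) * ((m.choose i : ℝ) / ((i : ℝ) + 1) ^ k)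
        = (∑ m ∈ range (n+2),
            (stirling1 (n+1) m : ℝ) * (-1 : ℝ) ^ (n+1-m) * (m.choose i : ℝ)) / ((i : ℝ) + 1) ^ k := by
      rw [Finset.sum_div]
      exact Finset.sum_congr rfl fun m _ => by ring
    rw [this, rkey n i (by omega)]
    ring
  rw [Finset.sum_congr rfl hcol, Finset.sum_add_distrib]
  congr 1
  · rw [← Finset.mul_sum]
    congr 1
    rw [Finset.sum_range_succ, stirling1_eq_zero n (n+1) (by omega)]
    simp

theorem stmt14 (n r : ℕ) (k : ℤ) (hr : 1 ≤ r) (hn : r ≤ n) :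
    ∑ j ∈ Finset.Icc r n, (rStirling2 r n j : ℝ) * polyCauchyPoly k j 1 =
      ∑ j ∈ Finset.Icc (r - 1) n, (rStirling2 r (n + 1) (j + 1) : ℝ) * polyCauchy k j := by
  have pc_one' : ∀ j : ℕ, 1 ≤ j →
      polyCauchyPoly k j 1 = polyCauchy k j + (j:ℝ) * polyCauchy k (j-1) := by
    intro j hj
    match j, hj with
    | m+1, _ =>
      have h := pc_one k m
      have : ((m:ℕ)+1) - 1 = m := rfl
      rw [this]
      push_cast
      push_cast at h
      exact h
  have hrec : ∀ j ∈ Finset.Icc (r-1) n, (rStirling2 r (n+1) (j+1) : ℝ) * polyCauchy k j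
      = ((j:ℝ)+1) * (rStirling2 r n (j+1) : ℝ) * polyCauchy k j
        + (rStirling2 r n j : ℝ) * polyCauchy k j := by
    intro j _
    rw [rS2_rec r n j hn]
    push_cast
    ring
  rw [Finset.sum_congr rfl hrec, Finset.sum_add_distrib]
  have h2 : ∑ j ∈ Finset.Icc (r-1) n, (rStirling2 r n j : ℝ) * polyCauchy k j
      = ∑ j ∈ Finset.Icc r n, (rStirling2 r n j : ℝ) * polyCauchy k j := by
    symm
    apply Finset.sum_subset
    · intro x hx
      simp only [Finset.mem_Icc] at hx ⊢
      omega
    · intro x hx hx'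
      simp only [Finset.mem_Icc] at hx hx'
      rw [rS2_lt r n x (by omega)]
      simp
  have hmap : Finset.Icc r (n+1) = (Finset.Icc (r-1) n).map (addRightEmbedding 1) := by
    rw [Finset.map_add_right_Icc]
    congr 1
    omega
  have h1 : ∑ j ∈ Finset.Icc (r-1) n, ((j:ℝ)+1) * (rStirling2 r n (j+1) : ℝ) * polyCauchy k j
      = ∑ j ∈ Finset.Icc r n, (j:ℝ) * (rStirling2 r n j : ℝ) * polyCauchy k (j-1) := by
    have e1 : ∑ j ∈ Finset.Icc r (n+1), (j:ℝ) * (rStirling2 r n j : ℝ) * polyCauchy k (j-1)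
        = ∑ j ∈ Finset.Icc (r-1) n, ((j:ℝ)+1) * (rStirling2 r n (j+1) : ℝ) * polyCauchy k j := by
      rw [hmap, Finset.sum_map]
      refine Finset.sum_congr rfl fun j _ => ?_
      simp only [addRightEmbedding_apply, Nat.add_sub_cancel]
      push_cast
      ring
    rw [← e1, Finset.sum_Icc_succ_top (by omega : r ≤ n+1), rS2_gt r n (n+1) (by omega)]
    simp
  rw [h1, h2, ← Finset.sum_add_distrib]
  refine Finset.sum_congr rfl fun j hj => ?_
  simp only [Finset.mem_Icc] at hj
  rw [pc_one' j (by omega)]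
  ring
end
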